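/- Let f : ℝ^d → ℝ be twice continuously differentiable and suppose for all w, w' ∈ ℝ^d, ‖∇f(w')-∇f(w)‖ ≤ (L₀ + L₁·∫₀¹‖∇f(θw'+(1-θ)w)‖ dθ)·‖w'-w‖ with L₀, L₁ > 0. Then ‖∇²f(w)‖ ≤ L₀ + L₁‖∇f(w)‖ for all w, where ‖·‖ on the Hessian is the operator norm. -/

import Mathlib

open InnerProductSpace

theorem integral_condition_implies_hessian_bound {d : ℕ}
    (f : EuclideanSpace ℝ (Fin d) → ℝ) (hf : ContDiff ℝ 2 f)
    (L₀ L₁ : ℝ) (hL₀ : 0 < L₀) (hL₁ : 0 < L₁)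
    (hsmooth : ∀ w w' : EuclideanSpace ℝ (Fin d),
      ‖gradient f w' - gradient f w‖ ≤
        (L₀ + L₁ * ∫ θ in (0:ℝ)..1, ‖gradient f (θ • w' + (1 - θ) • w)‖) * ‖w' - w‖) :
    ∀ w : EuclideanSpace ℝ (Fin d),
      ‖fderiv ℝ (gradient f) w‖ ≤ L₀ + L₁ * ‖gradient f w‖ := by
  -- the gradient is C¹
  have h1 : ContDiff ℝ 1 (gradient f) := by
    have hfd : ContDiff ℝ 1 (fderiv ℝ f) := hf.fderiv_right (by norm_num)
    exact ((toDual ℝ (EuclideanSpace ℝ (Fin d))).symm.contDiff).comp hfd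
  have hcont : Continuous (gradient f) := h1.continuous
  intro w
  set A := fderiv ℝ (gradient f) w with hA
  set G := ‖gradient f w‖ with hG
  have hGnn : 0 ≤ G := norm_nonneg _
  -- key estimate for each direction and each ε > 0
  have key : ∀ (v : EuclideanSpace ℝ (Fin d)) (ε : ℝ), 0 < ε → v ≠ 0 →
      ‖A v‖ ≤ (L₀ + L₁ * (G + ε)) * ‖v‖ := by
    intro v ε hε hv
    have hvn : 0 < ‖v‖ := norm_pos_iff.mpr hv
    -- continuity of gradient at w gives δ
    obtain ⟨δ, hδ, hδ'⟩ := Metric.continuousAt_iff.mp (hcont.continuousAt (x := w)) ε hε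
    -- g t = gradient f (w + t • v) has derivative A v at 0
    have hline : HasDerivAt (fun t : ℝ => w + t • v) v 0 := by
      simpa using ((hasDerivAt_id (0:ℝ)).smul_const v).const_add w
    have hAd : HasFDerivAt (gradient f) A (w + (0:ℝ) • v) := by
      simpa using (h1.differentiable one_ne_zero w).hasFDerivAt
    have hg : HasDerivAt (fun t : ℝ => gradient f (w + t • v)) (A v) 0 :=
      hAd.comp_hasDerivAt (f := fun t : ℝ => w + t • v) (x := 0) hline
    have hCnn : 0 ≤ (L₀ + L₁ * (G + ε)) * ‖v‖ := by positivity
    have hbound : ∀ᶠ t in nhds (0:ℝ),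
        ‖gradient f (w + t • v) - gradient f (w + (0:ℝ) • v)‖
          ≤ ((L₀ + L₁ * (G + ε)) * ‖v‖) * ‖t - 0‖ := by
      have hmem : Set.Ioo (-(δ / ‖v‖)) (δ / ‖v‖) ∈ nhds (0:ℝ) :=
        Ioo_mem_nhds (by have := div_pos hδ hvn; linarith) (by positivity)
      filter_upwards [hmem] with t ht
      have htv : |t| * ‖v‖ < δ := by
        have h1' : |t| < δ / ‖v‖ := abs_lt.mpr ⟨ht.1, ht.2⟩
        calc |t| * ‖v‖ < (δ / ‖v‖) * ‖v‖ := by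
              exact mul_lt_mul_of_pos_right h1' hvn
          _ = δ := by field_simp
      -- the integrand bound
      have hI : (∫ θ in (0:ℝ)..1, ‖gradient f (θ • (w + t • v) + (1 - θ) • w)‖)
          ≤ G + ε := by
        have hint1 : Continuous fun θ : ℝ => ‖gradient f (θ • (w + t • v) + (1 - θ) • w)‖ := by
          fun_prop
        have hle : ∀ θ ∈ Set.Icc (0:ℝ) 1,
            ‖gradient f (θ • (w + t • v) + (1 - θ) • w)‖ ≤ G + ε := by
          intro θ hθ
          have hpt : θ • (w + t • v) + (1 - θ) • w = w + (θ * t) • v := by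
            module
          rw [hpt]
          have hdist : dist (w + (θ * t) • v) w < δ := by
            rw [dist_eq_norm]
            have : ‖w + (θ * t) • v - w‖ = |θ * t| * ‖v‖ := by
              simp [norm_smul, Real.norm_eq_abs, abs_mul]
            rw [this]
            have : |θ * t| * ‖v‖ ≤ |t| * ‖v‖ := by
              apply mul_le_mul_of_nonneg_right _ (norm_nonneg v)
              rw [abs_mul]
              calc |θ| * |t| ≤ 1 * |t| := by
                    apply mul_le_mul_of_nonneg_right _ (abs_nonneg t)
                    rw [abs_of_nonneg hθ.1]; exact hθ.2
                _ = |t| := one_mul _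
            linarith
          have := hδ' hdist
          rw [dist_eq_norm] at this
          calc ‖gradient f (w + (θ * t) • v)‖
              ≤ ‖gradient f (w + (θ * t) • v) - gradient f w‖ + ‖gradient f w‖ := by
                simpa using norm_add_le (gradient f (w + (θ * t) • v) - gradient f w)
                  (gradient f w)
            _ ≤ ε + G := by rw [hG]; linarith
            _ = G + ε := by ring
        calc (∫ θ in (0:ℝ)..1, ‖gradient f (θ • (w + t • v) + (1 - θ) • w)‖)
            ≤ ∫ _ in (0:ℝ)..1, (G + ε) :=
              intervalIntegral.integral_mono_on (by norm_num)
                (hint1.intervalIntegrable 0 1) (intervalIntegrable_const) hle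
          _ = G + ε := by simp
      have hmain := hsmooth w (w + t • v)
      have hsub : w + t • v - w = t • v := by abel
      rw [hsub] at hmain
      have hIn : (0:ℝ) ≤ L₀ + L₁ * ∫ θ in (0:ℝ)..1,
          ‖gradient f (θ • (w + t • v) + (1 - θ) • w)‖ := by
        have : (0:ℝ) ≤ ∫ θ in (0:ℝ)..1,
            ‖gradient f (θ • (w + t • v) + (1 - θ) • w)‖ :=
          intervalIntegral.integral_nonneg (by norm_num) (fun _ _ => norm_nonneg _)
        positivity
      calc ‖gradient f (w + t • v) - gradient f (w + (0:ℝ) • v)‖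
          = ‖gradient f (w + t • v) - gradient f w‖ := by norm_num
        _ ≤ (L₀ + L₁ * ∫ θ in (0:ℝ)..1,
              ‖gradient f (θ • (w + t • v) + (1 - θ) • w)‖) * ‖t • v‖ := hmain
        _ ≤ (L₀ + L₁ * (G + ε)) * ‖t • v‖ := by
            apply mul_le_mul_of_nonneg_right _ (norm_nonneg _)
            nlinarith
        _ = ((L₀ + L₁ * (G + ε)) * ‖v‖) * ‖t - 0‖ := by
            rw [norm_smul]; simp [Real.norm_eq_abs]; ring
    exact hg.le_of_lip' hCnn hbound
  -- conclude via opNorm bound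
  rw [hA]
  apply ContinuousLinearMap.opNorm_le_bound _ (by positivity)
  intro v
  by_cases hv : v = 0
  · simp [hv]
  have hvn : 0 < ‖v‖ := norm_pos_iff.mpr hv
  apply le_of_forall_pos_le_add
  intro ε' hε'
  have hε : 0 < ε' / (L₁ * ‖v‖) := by positivity
  have := key v _ hε hv
  calc ‖fderiv ℝ (gradient f) w v‖ ≤ (L₀ + L₁ * (G + ε' / (L₁ * ‖v‖))) * ‖v‖ := this
    _ = (L₀ + L₁ * G) * ‖v‖ + ε' := by field_simp; ring
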